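/- arXiv:1207.1479 — 3 statements merged into one kernel-verified Lean document; each statement's English description precedes it below -/
import Mathlib

section
/- Let a = a_1 ⊗ a_2 ⊗ ... ⊗ a_p and b = b_1 ⊗ b_2 ⊗ ... ⊗ b_p be nonzero elementary tensors in C^{n_1} ⊗ ... ⊗ C^{n_p}. Then a + b is an elementary tensor (i.e., a product vector) if and only if a_i and b_i are linearly dependent for all indices i with at most one exception. -/
open scoped BigOperators

noncomputable section

private lemma dot_single {m : ℕ} (v : Fin m) (g : Fin m → ℂ) :
    (∑ u, (Pi.single v 1 : Fin m → ℂ) u * g u) = g v := by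
  simp [Pi.single_apply, ite_mul]

private lemma prod_dot_eq_sum {p : ℕ} {n : Fin p → ℕ} (φ v : ∀ i, Fin (n i) → ℂ) :
    (∏ i, ∑ u, φ i u * v i u) =
      ∑ x : ∀ i, Fin (n i), (∏ i, φ i (x i)) * ∏ i, v i (x i) := by
  rw [Finset.prod_univ_sum, ← Fintype.piFinset_univ]
  exact Finset.sum_congr rfl fun x _ => Finset.prod_mul_distrib

private lemma exists_killer {m : ℕ} {a b : Fin m → ℂ} (ha : a ≠ 0)
    (h : ∀ γ : ℂ, b ≠ γ • a) :
    ∃ φ : Fin m → ℂ, (∑ u, φ u * a u) ≠ 0 ∧ (∑ u, φ u * b u) = 0 := by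
  have hb : b ≠ 0 := by simpa using h 0
  obtain ⟨w, hw⟩ := Function.ne_iff.1 hb
  simp only [Pi.zero_apply] at hw
  have hv : ∃ v, b w * a v - b v * a w ≠ 0 := by
    by_contra hno
    push_neg at hno
    have haw : a w ≠ 0 := by
      intro h0
      apply ha
      funext v
      have h1 := hno v
      rw [h0, mul_zero, sub_zero] at h1
      simpa using (mul_eq_zero.1 h1).resolve_left hw
    apply h (b w / a w)
    funext v
    have h1 := hno v
    rw [sub_eq_zero] at h1
    show b v = (b w / a w) * a v
    field_simp
    linear_combination -h1
  obtain ⟨v, hv⟩ := hv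
  refine ⟨fun u => b w * (Pi.single v 1 : Fin m → ℂ) u
      - b v * (Pi.single w 1 : Fin m → ℂ) u, ?_, ?_⟩
  · have heq : (∑ u, (b w * (Pi.single v 1 : Fin m → ℂ) u
        - b v * (Pi.single w 1 : Fin m → ℂ) u) * a u) = b w * a v - b v * a w := by
      simp only [sub_mul, mul_assoc, Finset.sum_sub_distrib, ← Finset.mul_sum, dot_single]
    rw [heq]; exact hv
  · have heq : (∑ u, (b w * (Pi.single v 1 : Fin m → ℂ) u
        - b v * (Pi.single w 1 : Fin m → ℂ) u) * b u) = b w * b v - b v * b w := by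
      simp only [sub_mul, mul_assoc, Finset.sum_sub_distrib, ← Finset.mul_sum, dot_single]
    rw [heq]; ring

private lemma contract {p : ℕ} {n : Fin p → ℕ} {a b c : ∀ i, Fin (n i) → ℂ}
    (hc : (fun x : ∀ i, Fin (n i) => (∏ i, a i (x i)) + ∏ i, b i (x i)) =
        fun x => ∏ i, c i (x i))
    (k : Fin p) (φ : ∀ i, Fin (n i) → ℂ) :
    (∏ i ∈ Finset.univ.erase k, ∑ u, φ i u * a i u) • a k +
      (∏ i ∈ Finset.univ.erase k, ∑ u, φ i u * b i u) • b k =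
      (∏ i ∈ Finset.univ.erase k, ∑ u, φ i u * c i u) • c k := by
  have star : ∀ ψ : ∀ i, Fin (n i) → ℂ,
      (∏ i, ∑ u, ψ i u * a i u) + (∏ i, ∑ u, ψ i u * b i u) =
        ∏ i, ∑ u, ψ i u * c i u := by
    intro ψ
    rw [prod_dot_eq_sum, prod_dot_eq_sum, prod_dot_eq_sum, ← Finset.sum_add_distrib]
    refine Finset.sum_congr rfl fun x _ => ?_
    have hx := congrFun hc x
    rw [← mul_add, hx]
  funext u
  have key : ∀ v : ∀ i, Fin (n i) → ℂ,
      (∏ i, ∑ w, (Function.update φ k (Pi.single u 1)) i w * v i w) =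
        v k u * ∏ i ∈ Finset.univ.erase k, ∑ w, φ i w * v i w := by
    intro v
    rw [← Finset.mul_prod_erase Finset.univ _ (Finset.mem_univ k)]
    congr 1
    · rw [Function.update_self]
      exact dot_single u (v k)
    · refine Finset.prod_congr rfl fun i hi => ?_
      rw [Function.update_of_ne (Finset.ne_of_mem_erase hi)]
  have hstar := star (Function.update φ k (Pi.single u 1))
  rw [key a, key b, key c] at hstar
  simp only [Pi.add_apply, Pi.smul_apply, smul_eq_mul]
  linear_combination hstar


/-- Let `a = a₁ ⊗ ⋯ ⊗ a_p` and `b = b₁ ⊗ ⋯ ⊗ b_p` be nonzero elementary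
tensors in `ℂ^{n₁} ⊗ ⋯ ⊗ ℂ^{n_p}`.  Then `a + b` is an elementary tensor (a product vector)
if and only if `a_i` and `b_i` are linearly dependent for all indices `i` with at most one
exception. -/
theorem sum_of_elementary_tensors_is_elementary_iff (p : ℕ) (hp : 0 < p) (n : Fin p → ℕ)
    (a b : ∀ i, Fin (n i) → ℂ) (ha : ∀ i, a i ≠ 0) (hb : ∀ i, b i ≠ 0) :
    (∃ c : ∀ i, Fin (n i) → ℂ,
        (fun x : ∀ i, Fin (n i) => (∏ i, a i (x i)) + ∏ i, b i (x i)) =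
          fun x => ∏ i, c i (x i)) ↔
      ∃ j : Fin p, ∀ i, i ≠ j → ∃ γ : ℂ, b i = γ • a i := by
  constructor
  · rintro ⟨c, hc⟩
    by_contra hcon
    push_neg at hcon
    obtain ⟨i₁, -, h1⟩ := hcon ⟨0, hp⟩
    obtain ⟨i₂, hne, h2⟩ := hcon i₁
    -- nonvanishing coordinates
    have haU : ∀ i, ∃ u, a i u ≠ 0 := by
      intro i
      obtain ⟨u, hu⟩ := Function.ne_iff.1 (ha i)
      exact ⟨u, by simpa using hu⟩
    have hbU : ∀ i, ∃ u, b i u ≠ 0 := by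
      intro i
      obtain ⟨u, hu⟩ := Function.ne_iff.1 (hb i)
      exact ⟨u, by simpa using hu⟩
    choose ua hua using haU
    choose ub hub using hbU
    -- killers at i₂
    obtain ⟨ψa, hψa1, hψa2⟩ := exists_killer (ha i₂) h2
    have h2' : ∀ γ : ℂ, a i₂ ≠ γ • b i₂ := by
      intro γ hγ
      rcases eq_or_ne γ 0 with rfl | hγ0
      · exact ha i₂ (by simpa using hγ)
      · exact h2 γ⁻¹ (by rw [hγ, smul_smul, inv_mul_cancel₀ hγ0, one_smul])
    obtain ⟨ψb, hψb1, hψb2⟩ := exists_killer (hb i₂) h2'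
    set φ1 : ∀ i, Fin (n i) → ℂ :=
      Function.update (fun i => (Pi.single (ua i) 1 : Fin (n i) → ℂ)) i₂ ψa with hφ1
    set φ2 : ∀ i, Fin (n i) → ℂ :=
      Function.update (fun i => (Pi.single (ub i) 1 : Fin (n i) → ℂ)) i₂ ψb with hφ2
    have hmem : i₂ ∈ Finset.univ.erase i₁ := Finset.mem_erase.2 ⟨hne, Finset.mem_univ _⟩
    -- first contraction
    have con1 := contract hc i₁ φ1
    have hB1 : (∏ i ∈ Finset.univ.erase i₁, ∑ u, φ1 i u * b i u) = 0 := by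
      apply Finset.prod_eq_zero hmem
      rw [hφ1, Function.update_self]
      exact hψa2
    have hA1 : (∏ i ∈ Finset.univ.erase i₁, ∑ u, φ1 i u * a i u) ≠ 0 := by
      rw [Finset.prod_ne_zero_iff]
      intro i _
      rcases eq_or_ne i i₂ with rfl | hii
      · rw [hφ1, Function.update_self]; exact hψa1
      · rw [hφ1, Function.update_of_ne hii, dot_single]; exact hua i
    rw [hB1, zero_smul, add_zero] at con1
    -- second contraction
    have con2 := contract hc i₁ φ2
    have hA2 : (∏ i ∈ Finset.univ.erase i₁, ∑ u, φ2 i u * a i u) = 0 := by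
      apply Finset.prod_eq_zero hmem
      rw [hφ2, Function.update_self]
      exact hψb2
    have hB2 : (∏ i ∈ Finset.univ.erase i₁, ∑ u, φ2 i u * b i u) ≠ 0 := by
      rw [Finset.prod_ne_zero_iff]
      intro i _
      rcases eq_or_ne i i₂ with rfl | hii
      · rw [hφ2, Function.update_self]; exact hψb1
      · rw [hφ2, Function.update_of_ne hii, dot_single]; exact hub i
    rw [hA2, zero_smul, zero_add] at con2
    set A1 := ∏ i ∈ Finset.univ.erase i₁, ∑ u, φ1 i u * a i u
    set C1 := ∏ i ∈ Finset.univ.erase i₁, ∑ u, φ1 i u * c i u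
    set B2 := ∏ i ∈ Finset.univ.erase i₁, ∑ u, φ2 i u * b i u
    set C2 := ∏ i ∈ Finset.univ.erase i₁, ∑ u, φ2 i u * c i u
    have hC1 : C1 ≠ 0 := by
      intro h0
      rw [h0, zero_smul] at con1
      exact ha i₁ ((smul_eq_zero.1 con1).resolve_left hA1)
    apply h1 (B2⁻¹ * C2 * (C1⁻¹ * A1))
    have hc1 : c i₁ = (C1⁻¹ * A1) • a i₁ := by
      rw [mul_smul, con1, smul_smul, inv_mul_cancel₀ hC1, one_smul]
    have hb1 : b i₁ = (B2⁻¹ * C2) • c i₁ := by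
      rw [mul_smul, ← con2, smul_smul, inv_mul_cancel₀ hB2, one_smul]
    rw [hb1, hc1, smul_smul]
  · rintro ⟨j, hj⟩
    choose γ hγ using hj
    set Γ : ℂ := ∏ i ∈ Finset.univ.erase j, if h : i = j then 1 else γ i h with hΓ
    refine ⟨Function.update a j (fun u => a j u + Γ * b j u), ?_⟩
    funext x
    rw [← Finset.mul_prod_erase Finset.univ (fun i => a i (x i)) (Finset.mem_univ j),
      ← Finset.mul_prod_erase Finset.univ (fun i => b i (x i)) (Finset.mem_univ j),
      ← Finset.mul_prod_erase Finset.univ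
        (fun i => Function.update a j (fun u => a j u + Γ * b j u) i (x i)) (Finset.mem_univ j)]
    have hprodb : (∏ i ∈ Finset.univ.erase j, b i (x i)) =
        Γ * ∏ i ∈ Finset.univ.erase j, a i (x i) := by
      rw [hΓ, ← Finset.prod_mul_distrib]
      refine Finset.prod_congr rfl fun i hi => ?_
      have hij : i ≠ j := Finset.ne_of_mem_erase hi
      rw [dif_neg hij, hγ i hij]
      rfl
    have hprodc : (∏ i ∈ Finset.univ.erase j,
        Function.update a j (fun u => a j u + Γ * b j u) i (x i)) =
        ∏ i ∈ Finset.univ.erase j, a i (x i) := by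
      refine Finset.prod_congr rfl fun i hi => ?_
      rw [Function.update_of_ne (Finset.ne_of_mem_erase hi)]
    rw [hprodb, hprodc, Function.update_self]
    ring
end
end

section
/- Let p ≥ 3 and suppose X_1, ..., X_p ∈ M_{n,m} are rank-one matrices such that X_i + X_j has rank at most one for all i ≠ j. Then X_1 + X_2 + ... + X_p has rank at most one. -/
open scoped BigOperators

open Matrix

noncomputable section

lemma rank_le_one_of_factor {n m : ℕ} (A : Matrix (Fin n) (Fin m) ℂ)
    (v : Fin n → ℂ) (w : Fin m → ℂ) (h : ∀ i j, A i j = v i * w j) :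
    A.rank ≤ 1 := by
  rw [Matrix.rank_eq_finrank_span_cols]
  have hle : Submodule.span ℂ (Set.range Aᵀ) ≤ Submodule.span ℂ {v} := by
    rw [Submodule.span_le]
    rintro _ ⟨j, rfl⟩
    rw [SetLike.mem_coe, Submodule.mem_span_singleton]
    exact ⟨w j, by ext i; simp [Matrix.transpose_apply, h i j, mul_comm]⟩
  calc Module.finrank ℂ (Submodule.span ℂ (Set.range Aᵀ))
      ≤ Module.finrank ℂ (Submodule.span ℂ ({v} : Set (Fin n → ℂ))) :=
        Submodule.finrank_mono hle
    _ ≤ 1 := by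
        simpa using finrank_span_le_card ({v} : Set (Fin n → ℂ))

lemma factor_of_rank_le_one {n m : ℕ} (A : Matrix (Fin n) (Fin m) ℂ)
    (h : A.rank ≤ 1) : ∃ (v : Fin n → ℂ) (w : Fin m → ℂ), ∀ i j, A i j = v i * w j := by
  rw [Matrix.rank_eq_finrank_span_cols] at h
  obtain ⟨v, hv⟩ := (Submodule.finrank_le_one_iff_isPrincipal _).mp h
  have hmem : ∀ j, ∃ c : ℂ, c • v = Aᵀ j := by
    intro j
    have : Aᵀ j ∈ Submodule.span ℂ (Set.range Aᵀ) := Submodule.subset_span ⟨j, rfl⟩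
    rw [show Set.range Aᵀ = Set.range A.col from rfl, hv] at this
    exact Submodule.mem_span_singleton.mp this
  choose c hc using hmem
  refine ⟨v, c, fun i j => ?_⟩
  have := congrFun (hc j) i
  simp only [Pi.smul_apply, smul_eq_mul, Matrix.transpose_apply] at this
  rw [← this, mul_comm]

/-- proportionality via vanishing cross products -/
def IsProp {k : ℕ} (u v : Fin k → ℂ) : Prop := ∀ i j, u i * v j = u j * v i

lemma IsProp_symm {k : ℕ} {u v : Fin k → ℂ} (h : IsProp u v) : IsProp v u := by
  intro i j; linear_combination h j i

lemma IsProp_trans {k : ℕ} {u v w : Fin k → ℂ} (hv : ∃ t, v t ≠ 0)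
    (h1 : IsProp u v) (h2 : IsProp v w) : IsProp u w := by
  obtain ⟨t, ht⟩ := hv
  intro i j
  have key : (u i * w j - u j * w i) * v t = 0 := by
    linear_combination u i * h2 t j + w t * h1 i j - u j * h2 t i
  rcases mul_eq_zero.mp key with h | h
  · linear_combination h
  · exact absurd h ht

/-- Let `p ≥ 3` and suppose `X₁, …, X_p ∈ M_{n,m}` are rank-one matrices
such that `X_i + X_j` has rank at most one for all `i ≠ j`.  Then `X₁ + ⋯ + X_p` has rank at
most one. -/
theorem rank_one_sum (p : ℕ) (hp : 3 ≤ p) (n m : ℕ)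
    (X : Fin p → Matrix (Fin n) (Fin m) ℂ)
    (hrank : ∀ i, (X i).rank = 1)
    (hpair : ∀ i j, i ≠ j → (X i + X j).rank ≤ 1) :
    (∑ i, X i).rank ≤ 1 := by
  have hfac : ∀ i, ∃ (a : Fin n → ℂ) (b : Fin m → ℂ), ∀ r c, X i r c = a r * b c :=
    fun i => factor_of_rank_le_one (X i) (le_of_eq (hrank i))
  choose a b hab using hfac
  have hne : ∀ i, ∃ r c, X i r c ≠ 0 := by
    intro i
    by_contra h
    push_neg at h
    have h0 : X i = 0 := by ext r c; exact h r c
    have := hrank i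
    rw [h0, Matrix.rank_zero] at this
    exact zero_ne_one this
  have ha : ∀ i, ∃ r, a i r ≠ 0 := by
    intro i
    obtain ⟨r, c, h⟩ := hne i
    exact ⟨r, fun h0 => h (by rw [hab i r c, h0, zero_mul])⟩
  have hb : ∀ i, ∃ c, b i c ≠ 0 := by
    intro i
    obtain ⟨r, c, h⟩ := hne i
    exact ⟨c, fun h0 => h (by rw [hab i r c, h0, mul_zero])⟩
  have hcross : ∀ i j, i ≠ j → IsProp (a i) (a j) ∨ IsProp (b i) (b j) := by
    intro i j hij
    by_cases hPa : IsProp (a i) (a j)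
    · exact Or.inl hPa
    refine Or.inr ?_
    obtain ⟨u, w, huw⟩ := factor_of_rank_le_one _ (hpair i j hij)
    unfold IsProp at hPa
    push_neg at hPa
    obtain ⟨r, r', hr⟩ := hPa
    intro c c'
    have h1 := huw r c
    have h2 := huw r' c'
    have h3 := huw r c'
    have h4 := huw r' c
    simp only [Matrix.add_apply, hab] at h1 h2 h3 h4
    have key : (a i r * a j r' - a i r' * a j r) * (b i c * b j c' - b i c' * b j c) = 0 := by
      linear_combination (a i r' * b i c' + a j r' * b j c') * h1 + (u r * w c) * h2
        - (a i r' * b i c + a j r' * b j c) * h3 - (u r * w c') * h4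
    rcases mul_eq_zero.mp key with h | h
    · exact absurd (by linear_combination h) hr
    · linear_combination h
  set i0 : Fin p := ⟨0, by omega⟩ with hi0
  by_cases hall : ∀ j, IsProp (a i0) (a j)
  · obtain ⟨t, ht⟩ := ha i0
    apply rank_le_one_of_factor _ (a i0) (fun c => ∑ j, (a j t / a i0 t) * b j c)
    intro r c
    rw [Matrix.sum_apply, Finset.mul_sum]
    apply Finset.sum_congr rfl
    intro j _
    rw [hab]
    have h := hall j r t
    field_simp
    linear_combination -b j c * h
  · push_neg at hall
    obtain ⟨j0, hj0⟩ := hall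
    have hj0ne : j0 ≠ i0 := by rintro rfl; exact hj0 (fun i j => by ring)
    have hb0 : IsProp (b i0) (b j0) := (hcross i0 j0 (Ne.symm hj0ne)).resolve_left hj0
    have hBall : ∀ k, IsProp (b i0) (b k) := by
      intro k
      by_cases hk0 : k = i0
      · subst hk0; intro i j; ring
      by_cases hkj : k = j0
      · subst hkj; exact hb0
      rcases hcross i0 k (fun h => hk0 h.symm) with hA1 | hB1
      · rcases hcross j0 k (fun h => hkj h.symm) with hA2 | hB2
        · exact absurd (IsProp_trans (ha k) hA1 (IsProp_symm hA2)) hj0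
        · exact IsProp_trans (hb j0) hb0 hB2
      · exact hB1
    obtain ⟨t, ht⟩ := hb i0
    apply rank_le_one_of_factor _ (fun r => ∑ k, (b k t / b i0 t) * a k r) (b i0)
    intro r c
    rw [Matrix.sum_apply, Finset.sum_mul]
    apply Finset.sum_congr rfl
    intro k _
    rw [hab]
    have h := hBall k c t
    field_simp
    linear_combination -(a k r) * h
end
end

section
/- Let U ∈ M_m ⊗ M_n be a linear operator such that ‖U v‖ = ‖v‖ for all separable (product) vectors v ∈ C^m ⊗ C^n. Then U is unitary. -/
open scoped BigOperators

noncomputable section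

/-- Elementary tensor of two vectors. -/
def tens {m n : ℕ} (a : Fin m → ℂ) (b : Fin n → ℂ) : Fin m × Fin n → ℂ :=
  fun p => a p.1 * b p.2

/-- Inner product `⟨w|v⟩`, conjugate-linear in the first argument. -/
def ip {ι : Type} [Fintype ι] (w v : ι → ℂ) : ℂ :=
  ∑ i, (starRingEnd ℂ) (w i) * v i

/-- Euclidean norm. -/
def nrm {ι : Type} [Fintype ι] (v : ι → ℂ) : ℝ :=
  Real.sqrt (∑ i, Complex.normSq (v i))

/-- Schmidt rank at most `k`: `v` is a sum of `k` elementary tensors. -/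
def SRle {m n : ℕ} (k : ℕ) (v : Fin m × Fin n → ℂ) : Prop :=
  ∃ (a : Fin k → Fin m → ℂ) (b : Fin k → Fin n → ℂ),
    v = fun p => ∑ l, a l p.1 * b l p.2

/-- The `s(k)`-vector norm. -/
def snorm {m n : ℕ} (k : ℕ) (v : Fin m × Fin n → ℂ) : ℝ :=
  sSup { r : ℝ | ∃ w : Fin m × Fin n → ℂ, nrm w = 1 ∧ SRle k w ∧ r = ‖ip w v‖ }

/-- The `S(k)`-operator norm. -/
def Snorm {m n : ℕ} (k : ℕ) (X : Matrix (Fin m × Fin n) (Fin m × Fin n) ℂ) : ℝ :=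
  sSup { r : ℝ | ∃ v w : Fin m × Fin n → ℂ, nrm v = 1 ∧ nrm w = 1 ∧ SRle k v ∧ SRle k w ∧
    r = ‖ip w (X.mulVec v)‖ }

/-- `k`-block positivity: `⟨v|X|v⟩ ≥ 0` for all unit vectors of Schmidt rank at most `k`. -/
def kBlockPos {m n : ℕ} (k : ℕ) (X : Matrix (Fin m × Fin n) (Fin m × Fin n) ℂ) : Prop :=
  ∀ v : Fin m × Fin n → ℂ, nrm v = 1 → SRle k v → 0 ≤ (ip v (X.mulVec v)).re

def bform {ι : Type} [Fintype ι] (M : ι → ι → ℂ) (x y : ι → ℂ) : ℂ :=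
  ∑ p, ∑ q, (starRingEnd ℂ) (x p) * M p q * y q

lemma bform_expand {ι : Type} [Fintype ι] (M : ι → ι → ℂ) (x y : ι → ℂ) :
    bform M (x + y) (x + y) = bform M x x + bform M y y + bform M x y + bform M y x := by
  simp only [bform, ← Finset.sum_add_distrib]
  refine Finset.sum_congr rfl fun p _ => Finset.sum_congr rfl fun q _ => ?_
  simp [map_add]; ring

lemma bform_smul_right {ι : Type} [Fintype ι] (M : ι → ι → ℂ) (c : ℂ) (x y : ι → ℂ) :
    bform M x (c • y) = c * bform M x y := by
  simp only [bform, Finset.mul_sum, Pi.smul_apply, smul_eq_mul]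
  exact Finset.sum_congr rfl fun p _ => Finset.sum_congr rfl fun q _ => by ring

lemma bform_smul_left {ι : Type} [Fintype ι] (M : ι → ι → ℂ) (c : ℂ) (x y : ι → ℂ) :
    bform M (c • x) y = (starRingEnd ℂ) c * bform M x y := by
  simp only [bform, Finset.mul_sum, Pi.smul_apply, smul_eq_mul, map_mul]
  exact Finset.sum_congr rfl fun p _ => Finset.sum_congr rfl fun q _ => by ring

lemma bform_basis {ι : Type} [Fintype ι] [DecidableEq ι] (M : ι → ι → ℂ) (p q : ι) :
    bform M (fun t => if t = p then 1 else 0) (fun t => if t = q then 1 else 0) = M p q := by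
  simp [bform, apply_ite, Finset.mul_sum, mul_ite, ite_mul, Finset.sum_ite_eq']

lemma quad_zero {ι : Type} [Fintype ι] [DecidableEq ι] (M : ι → ι → ℂ)
    (h : ∀ x : ι → ℂ, bform M x x = 0) :
    ∀ p q, M p q = 0 := by
  have hpol : ∀ x y : ι → ℂ, bform M x y + bform M y x = 0 := by
    intro x y
    have := bform_expand M x y
    rw [h (x + y), h x, h y] at this
    linear_combination -this
  intro p q
  set ep : ι → ℂ := fun t => if t = p then 1 else 0
  set eq' : ι → ℂ := fun t => if t = q then 1 else 0
  have h1 : bform M ep eq' + bform M eq' ep = 0 := hpol ep eq'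
  have h2 := hpol ep (Complex.I • eq')
  rw [bform_smul_right, bform_smul_left] at h2
  have h3 : Complex.I * bform M ep eq' - Complex.I * bform M eq' ep = 0 := by
    have : (starRingEnd ℂ) Complex.I = -Complex.I := Complex.conj_I
    rw [this] at h2; linear_combination h2
  have h4 : bform M ep eq' = 0 := by
    have h2I : (2 * Complex.I) ≠ 0 := by simp [Complex.I_ne_zero]
    apply mul_left_cancel₀ h2I
    rw [mul_zero]; linear_combination Complex.I * h1 + h3
  rw [← bform_basis M p q]; exact h4

lemma ip_mulVec {ι : Type} [Fintype ι] (M : Matrix ι ι ℂ) (w v : ι → ℂ) :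
    ip w (M.mulVec v) = bform (fun p q => M p q) w v := by
  simp only [ip, bform, Matrix.mulVec, dotProduct, Finset.mul_sum]
  exact Finset.sum_congr rfl fun p _ => Finset.sum_congr rfl fun q _ => by ring

lemma ip_conjTranspose {ι : Type} [Fintype ι] (M : Matrix ι ι ℂ) (v w : ι → ℂ) :
    ip v (M.conjTranspose.mulVec w) = ip (M.mulVec v) w := by
  simp only [ip, Matrix.mulVec, dotProduct, Matrix.conjTranspose_apply, Finset.mul_sum,
    Finset.sum_mul, map_sum, map_mul]
  rw [Finset.sum_comm]
  refine Finset.sum_congr rfl fun p _ => Finset.sum_congr rfl fun q _ => ?_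
  rw [Complex.star_def]; ring

lemma ip_self {ι : Type} [Fintype ι] (w : ι → ℂ) :
    ip w w = ((∑ i, Complex.normSq (w i) : ℝ) : ℂ) := by
  rw [ip]
  push_cast
  exact Finset.sum_congr rfl fun i _ => (Complex.normSq_eq_conj_mul_self).symm

/-- If `U ∈ M_m ⊗ M_n` preserves the Euclidean norm of all separable
(product) vectors `a ⊗ b ∈ ℂ^m ⊗ ℂ^n`, then `U` is unitary. -/
theorem norm_preserving_on_separable_implies_unitary (m n : ℕ)
    (U : Matrix (Fin m × Fin n) (Fin m × Fin n) ℂ)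
    (h : ∀ (a : Fin m → ℂ) (b : Fin n → ℂ),
      nrm (U.mulVec (tens a b)) = nrm (tens a b)) :
    U.conjTranspose * U = 1 := by
  set X : Matrix (Fin m × Fin n) (Fin m × Fin n) ℂ := U.conjTranspose * U - 1 with hXdef
  -- the quadratic form of X vanishes on product vectors
  have hq : ∀ (a : Fin m → ℂ) (b : Fin n → ℂ),
      bform (fun p q => X p q) (tens a b) (tens a b) = 0 := by
    intro a b
    set v := tens a b with hv
    have hsum : (∑ i, Complex.normSq ((U.mulVec v) i)) = ∑ i, Complex.normSq (v i) := by
      have := h a b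
      rw [nrm, nrm] at this
      exact (Real.sqrt_inj (Finset.sum_nonneg fun _ _ => Complex.normSq_nonneg _)
        (Finset.sum_nonneg fun _ _ => Complex.normSq_nonneg _)).mp this
    have h1 : ip v (X.mulVec v) = 0 := by
      have hmv : X.mulVec v = (U.conjTranspose * U).mulVec v - v := by
        rw [hXdef, Matrix.sub_mulVec, Matrix.one_mulVec]
      have hlin : ip v (X.mulVec v)
          = ip v ((U.conjTranspose * U).mulVec v) - ip v v := by
        rw [hmv, ip, ip, ip, ← Finset.sum_sub_distrib]
        exact Finset.sum_congr rfl fun i _ => by simp [mul_sub]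
      rw [hlin, ← Matrix.mulVec_mulVec, ip_conjTranspose, ip_self, ip_self, hsum, sub_self]
    rw [← ip_mulVec]; exact h1
  -- entrywise vanishing via two polarizations
  have hent : ∀ p q, X p q = 0 := by
    have hMb : ∀ (b : Fin n → ℂ) (i i' : Fin m),
        (∑ j, ∑ j', (starRingEnd ℂ) (b j) * X (i, j) (i', j') * b j') = 0 := by
      intro b
      apply quad_zero (fun i i' => ∑ j, ∑ j', (starRingEnd ℂ) (b j) * X (i, j) (i', j') * b j')
      intro a
      have := hq a b
      rw [← this]
      simp only [bform, tens, Fintype.sum_prod_type, map_mul, Finset.mul_sum, Finset.sum_mul]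
      refine Finset.sum_congr rfl fun i _ => ?_
      rw [Finset.sum_comm]
      exact Finset.sum_congr rfl fun i' _ => Finset.sum_congr rfl fun j _ =>
        Finset.sum_congr rfl fun j' _ => by ring
    rintro ⟨i, j⟩ ⟨i', j'⟩
    exact quad_zero (fun j j' => X (i, j) (i', j')) (fun b => hMb b i i') j j'
  have : X = 0 := by
    ext p q; exact hent p q
  have := sub_eq_zero.mp this
  simpa using this
end
end
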